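/- Let h>0, a∈ℝ, ν∈(0,1], n∈ℕ with n≥1, let P∈ℝ^{n×n} be a symmetric positive definite matrix, and let y:(hℕ)_a→ℝⁿ. Then (1/2)·(_aΔ_h^ν (yᵀPy))(t) ≤ y(t+νh)ᵀ·P·(_aΔ_h^ν y)(t) for all t∈(hℕ)_{a+(1−ν)h}. -/

import Mathlib

open Finset Filter Matrix

/-- The `h`-factorial function `t_h^(ν) = h^ν Γ(t/h+1)/Γ(t/h+1-ν)`. -/
noncomputable def hfact (h t ν : ℝ) : ℝ :=
  h ^ ν * Real.Gamma (t / h + 1) / Real.Gamma (t / h + 1 - ν)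

/-- The forward `h`-difference operator. -/
noncomputable def fdiff (h : ℝ) (y : ℝ → ℝ) (t : ℝ) : ℝ := (y (t + h) - y t) / h

/-- The fractional `h`-sum of order `μ > 0` of `y : (hℕ)_a → ℝ`, evaluated at the
grid point `t = a + μh + k·h` of `(hℕ)_{a+μh}`. -/
noncomputable def hSum (h a μ : ℝ) (y : ℝ → ℝ) (k : ℕ) : ℝ :=
  (h / Real.Gamma μ) *
    ∑ j ∈ Finset.range (k + 1),
      hfact h (a + μ * h + (k : ℝ) * h - (a + (j : ℝ) * h + h)) (μ - 1) * y (a + (j : ℝ) * h)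

/-- The Riemann–Liouville-like `h`-difference of order `ν ∈ (0,1]` of `y : (hℕ)_a → ℝ`,
evaluated at the grid point `t = a + (1-ν)h + k·h` of `(hℕ)_{a+(1-ν)h}`:
for `ν ∈ (0,1)` it is `Δ_h` applied to the `(1-ν)`-fractional `h`-sum. -/
noncomputable def rlD (h a ν : ℝ) (y : ℝ → ℝ) (k : ℕ) : ℝ :=
  if ν = 1 then fdiff h y (a + (k : ℝ) * h)
  else (hSum h a (1 - ν) y (k + 1) - hSum h a (1 - ν) y k) / h

/-- Auxiliary: `Γ(m+μ)/Γ(m+1)`. -/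
noncomputable def gg (μ : ℝ) (m : ℕ) : ℝ := Real.Gamma (m + μ) / Real.Gamma (m + 1)

lemma gg_pos {μ : ℝ} (hμ : 0 < μ) (m : ℕ) : 0 < gg μ m := by
  apply div_pos <;> apply Real.Gamma_pos_of_pos <;> positivity

lemma gg_succ_le {μ : ℝ} (hμ0 : 0 < μ) (hμ1 : μ ≤ 1) (m : ℕ) : gg μ (m + 1) ≤ gg μ m := by
  have h1 : ((m : ℝ) + 1) + μ = ((m : ℝ) + μ) + 1 := by ring
  have hg1 : Real.Gamma (((m : ℝ) + μ) + 1) = ((m : ℝ) + μ) * Real.Gamma ((m : ℝ) + μ) :=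
    Real.Gamma_add_one (by positivity)
  have hg2 : Real.Gamma (((m : ℝ) + 1) + 1) = ((m : ℝ) + 1) * Real.Gamma ((m : ℝ) + 1) :=
    Real.Gamma_add_one (by positivity)
  have hΓ1 : 0 < Real.Gamma ((m : ℝ) + μ) := Real.Gamma_pos_of_pos (by positivity)
  have hΓ2 : 0 < Real.Gamma ((m : ℝ) + 1) := Real.Gamma_pos_of_pos (by positivity)
  unfold gg
  push_cast
  rw [h1, hg1, hg2]
  rw [div_le_div_iff₀ (by positivity) hΓ2]
  nlinarith [mul_nonneg (mul_pos hΓ1 hΓ2).le (sub_nonneg.2 hμ1)]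

lemma hSum_eq (h a μ : ℝ) (hh : 0 < h) (f : ℝ → ℝ) (k : ℕ) :
    hSum h a μ f k = (h ^ μ / Real.Gamma μ) *
      ∑ j ∈ Finset.range (k + 1), gg μ (k - j) * f (a + (j : ℝ) * h) := by
  unfold hSum
  rw [Finset.mul_sum, Finset.mul_sum]
  refine Finset.sum_congr rfl fun j hj => ?_
  have hjk : j ≤ k := Nat.lt_succ_iff.mp (Finset.mem_range.mp hj)
  have hT : (a + μ * h + (k : ℝ) * h - (a + (j : ℝ) * h + h)) / h = μ + (k : ℝ) - (j : ℝ) - 1 := by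
    field_simp; ring
  have hc : ((k - j : ℕ) : ℝ) = (k : ℝ) - (j : ℝ) := by
    rw [Nat.cast_sub hjk]
  unfold hfact
  rw [hT]
  have e2 : μ + (k : ℝ) - (j : ℝ) - 1 + 1 - (μ - 1) = ((k - j : ℕ) : ℝ) + 1 := by rw [hc]; ring
  have e1 : μ + (k : ℝ) - (j : ℝ) - 1 + 1 = ((k - j : ℕ) : ℝ) + μ := by rw [hc]; ring
  rw [e2, e1]
  have hpow : h ^ μ = h ^ (μ - 1) * h := by
    have hr := Real.rpow_add hh (μ - 1) 1
    rw [Real.rpow_one] at hr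
    rw [← hr]; norm_num
  rw [gg, hpow]
  have hΓ2 : Real.Gamma (((k - j : ℕ) : ℝ) + 1) ≠ 0 :=
    (Real.Gamma_pos_of_pos (by positivity)).ne'
  field_simp

lemma rlD_eq (h a ν : ℝ) (hh : 0 < h) (hne : ν ≠ 1) (hμpos : 0 < 1 - ν) (f : ℝ → ℝ) (k : ℕ) :
    rlD h a ν f k = (h ^ (1 - ν) / Real.Gamma (1 - ν) / h) *
      (gg (1 - ν) 0 * f (a + ((k : ℝ) + 1) * h)
        + ∑ j ∈ Finset.range (k + 1),
            (gg (1 - ν) (k + 1 - j) - gg (1 - ν) (k - j)) * f (a + (j : ℝ) * h)) := by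
  rw [rlD, if_neg hne, hSum_eq h a _ hh f (k + 1), hSum_eq h a _ hh f k,
    Finset.sum_range_succ]
  have e0 : k + 1 - (k + 1) = 0 := Nat.sub_self _
  have e1 : ((k + 1 : ℕ) : ℝ) = (k : ℝ) + 1 := by push_cast; ring
  rw [e0, e1]
  have e2 : ∑ j ∈ Finset.range (k + 1),
      (gg (1 - ν) (k + 1 - j) - gg (1 - ν) (k - j)) * f (a + (j : ℝ) * h)
      = ∑ j ∈ Finset.range (k + 1), gg (1 - ν) (k + 1 - j) * f (a + (j : ℝ) * h)
        - ∑ j ∈ Finset.range (k + 1), gg (1 - ν) (k - j) * f (a + (j : ℝ) * h) := by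
    rw [← Finset.sum_sub_distrib]
    exact Finset.sum_congr rfl fun j hj => by ring
  rw [e2]
  have hne0 : h ≠ 0 := hh.ne'
  have hΓ : Real.Gamma (1 - ν) ≠ 0 := (Real.Gamma_pos_of_pos hμpos).ne'
  ring

lemma dot_symm {n : ℕ} (P : Matrix (Fin n) (Fin n) ℝ) (hPsym : P.IsSymm) (u w : Fin n → ℝ) :
    u ⬝ᵥ P.mulVec w = w ⬝ᵥ P.mulVec u := by
  rw [Matrix.dotProduct_mulVec, ← Matrix.mulVec_transpose, hPsym, dotProduct_comm]

lemma polar {n : ℕ} (P : Matrix (Fin n) (Fin n) ℝ) (hPsym : P.IsSymm) (u w : Fin n → ℝ) :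
    (u - w) ⬝ᵥ P.mulVec (u - w)
      = u ⬝ᵥ P.mulVec u - 2 * (u ⬝ᵥ P.mulVec w) + w ⬝ᵥ P.mulVec w := by
  rw [Matrix.mulVec_sub, sub_dotProduct, dotProduct_sub, dotProduct_sub,
    dot_symm P hPsym w u]
  ring

lemma dot_mulVec_sum {n : ℕ} (P : Matrix (Fin n) (Fin n) ℝ) (u : Fin n → ℝ)
    (s : Finset ℕ) (w : ℕ → Fin n → ℝ) :
    u ⬝ᵥ P.mulVec (∑ j ∈ s, w j) = ∑ j ∈ s, u ⬝ᵥ P.mulVec (w j) := by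
  classical
  induction s using Finset.induction with
  | empty => simp
  | insert x s hx ih => simp [Finset.sum_insert hx, Matrix.mulVec_add, dotProduct_add, ih]

theorem stmt8 {n : ℕ} (hn : 1 ≤ n) (h a ν : ℝ) (hh : 0 < h) (hν0 : 0 < ν) (hν1 : ν ≤ 1)
    (P : Matrix (Fin n) (Fin n) ℝ) (hPsym : P.IsSymm) (hP : P.PosDef)
    (y : ℝ → Fin n → ℝ) :
    ∀ k : ℕ,
      (1 / 2) * rlD h a ν (fun t => y t ⬝ᵥ P.mulVec (y t)) k
        ≤ y (a + ((k : ℝ) + 1) * h) ⬝ᵥ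
            P.mulVec (fun i => rlD h a ν (fun t => y t i) k) := by
  intro k
  have qpos : ∀ x : Fin n → ℝ, 0 ≤ x ⬝ᵥ P.mulVec x := fun x => by
    simpa using hP.posSemidef.dotProduct_mulVec_nonneg x
  by_cases hν : ν = 1
  · -- first order case
    subst hν
    have hrl : ∀ f : ℝ → ℝ, rlD h a 1 f k = (f (a + (k : ℝ) * h + h) - f (a + (k : ℝ) * h)) / h :=
      fun f => by rw [rlD, if_pos rfl, fdiff]
    have e1 : a + ((k : ℝ) + 1) * h = a + (k : ℝ) * h + h := by ring
    rw [e1]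
    set u := y (a + (k : ℝ) * h + h) with hu
    set w := y (a + (k : ℝ) * h) with hw
    have hvec : (fun i => rlD h a 1 (fun t => y t i) k) = h⁻¹ • (u - w) := by
      funext i
      rw [hrl]
      simp only [Pi.smul_apply, Pi.sub_apply, smul_eq_mul]
      ring
    rw [hrl, hvec, Matrix.mulVec_smul, dotProduct_smul, Matrix.mulVec_sub,
      dotProduct_sub, smul_eq_mul, ← hu, ← hw]
    simp only [div_eq_mul_inv]
    have hpolar := polar P hPsym u w
    have hq := qpos (u - w)
    rw [hpolar] at hq
    have hhinv : 0 < h⁻¹ := inv_pos.2 hh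
    nlinarith [mul_nonneg hhinv.le hq]
  · -- fractional case
    set μ : ℝ := 1 - ν with hμdef
    have hνlt : ν < 1 := lt_of_le_of_ne hν1 hν
    have hμ0 : 0 < μ := by simp [hμdef]; linarith
    have hμ1 : μ ≤ 1 := by simp [hμdef]; linarith
    set c : ℝ := h ^ μ / Real.Gamma μ / h with hc
    have hcpos : 0 < c :=
      div_pos (div_pos (Real.rpow_pos_of_pos hh μ) (Real.Gamma_pos_of_pos hμ0)) hh
    set Z : Fin n → ℝ := y (a + ((k : ℝ) + 1) * h) with hZ
    -- scalar form of LHS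
    have hL : rlD h a ν (fun t => y t ⬝ᵥ P.mulVec (y t)) k
        = c * (gg μ 0 * (Z ⬝ᵥ P.mulVec Z)
          + ∑ j ∈ Finset.range (k + 1),
              (gg μ (k + 1 - j) - gg μ (k - j))
                * (y (a + (j : ℝ) * h) ⬝ᵥ P.mulVec (y (a + (j : ℝ) * h)))) := by
      rw [rlD_eq h a ν hh hν (by linarith) _ k]
    -- vector form of RHS argument
    have hvec : (fun i => rlD h a ν (fun t => y t i) k)
        = c • (gg μ 0 • Z
            + ∑ j ∈ Finset.range (k + 1),
                (gg μ (k + 1 - j) - gg μ (k - j)) • y (a + (j : ℝ) * h)) := by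
      funext i
      rw [rlD_eq h a ν hh hν (by linarith) _ k]
      simp only [Pi.smul_apply, Pi.add_apply, Finset.sum_apply, smul_eq_mul]
      rfl
    have hR : Z ⬝ᵥ P.mulVec (fun i => rlD h a ν (fun t => y t i) k)
        = c * (gg μ 0 * (Z ⬝ᵥ P.mulVec Z)
          + ∑ j ∈ Finset.range (k + 1),
              (gg μ (k + 1 - j) - gg μ (k - j))
                * (Z ⬝ᵥ P.mulVec (y (a + (j : ℝ) * h)))) := by
      rw [hvec, Matrix.mulVec_smul, dotProduct_smul, smul_eq_mul,
        Matrix.mulVec_add, dotProduct_add, Matrix.mulVec_smul,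
        dotProduct_smul, smul_eq_mul, dot_mulVec_sum]
      simp only [Matrix.mulVec_smul, dotProduct_smul, smul_eq_mul]
    rw [hL, hR, ← sub_nonneg]
    -- telescoping
    have htel : gg μ 0 + ∑ j ∈ Finset.range (k + 1), (gg μ (k + 1 - j) - gg μ (k - j))
        = gg μ (k + 1) := by
      have h1 : ∑ j ∈ Finset.range (k + 1), (gg μ (k + 1 - j) - gg μ (k - j))
          = ∑ j ∈ Finset.range (k + 1), (gg μ ((k - j) + 1) - gg μ (k - j)) := by
        refine Finset.sum_congr rfl fun j hj => ?_
        have hjk : j ≤ k := Nat.lt_succ_iff.mp (Finset.mem_range.mp hj)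
        congr 2
        omega
      have h2 := Finset.sum_range_reflect (fun m => gg μ (m + 1) - gg μ m) (k + 1)
      simp only [Nat.add_sub_cancel] at h2
      rw [h1, h2, Finset.sum_range_sub (fun m => gg μ m) (k + 1)]
      ring
    -- per-term quadratic identity
    have hsum0 : ∑ j ∈ Finset.range (k + 1),
        (2 * ((gg μ (k + 1 - j) - gg μ (k - j)) * (Z ⬝ᵥ P.mulVec (y (a + (j : ℝ) * h))))
          - (gg μ (k + 1 - j) - gg μ (k - j))
              * (y (a + (j : ℝ) * h) ⬝ᵥ P.mulVec (y (a + (j : ℝ) * h)))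
          - (gg μ (k - j) - gg μ (k + 1 - j))
              * ((Z - y (a + (j : ℝ) * h)) ⬝ᵥ P.mulVec (Z - y (a + (j : ℝ) * h)))
          - (gg μ (k + 1 - j) - gg μ (k - j)) * (Z ⬝ᵥ P.mulVec Z)) = 0 := by
      refine Finset.sum_eq_zero fun j hj => ?_
      have hp := polar P hPsym Z (y (a + (j : ℝ) * h))
      linear_combination (gg μ (k + 1 - j) - gg μ (k - j)) * hp
    simp only [Finset.sum_sub_distrib] at hsum0
    rw [← Finset.mul_sum, ← Finset.sum_mul] at hsum0
    have hrw : c * (gg μ 0 * (Z ⬝ᵥ P.mulVec Z)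
          + ∑ j ∈ Finset.range (k + 1),
              (gg μ (k + 1 - j) - gg μ (k - j)) * (Z ⬝ᵥ P.mulVec (y (a + (j : ℝ) * h))))
        - 1 / 2 * (c * (gg μ 0 * (Z ⬝ᵥ P.mulVec Z)
          + ∑ j ∈ Finset.range (k + 1),
              (gg μ (k + 1 - j) - gg μ (k - j))
                * (y (a + (j : ℝ) * h) ⬝ᵥ P.mulVec (y (a + (j : ℝ) * h)))))
        = (c / 2) * (gg μ (k + 1) * (Z ⬝ᵥ P.mulVec Z)
          + ∑ j ∈ Finset.range (k + 1),
              (gg μ (k - j) - gg μ (k + 1 - j))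
                * ((Z - y (a + (j : ℝ) * h)) ⬝ᵥ P.mulVec (Z - y (a + (j : ℝ) * h)))) := by
      linear_combination (c / 2) * hsum0 + (c / 2) * (Z ⬝ᵥ P.mulVec Z) * htel
    rw [hrw]
    apply mul_nonneg (by positivity)
    apply add_nonneg
    · exact mul_nonneg (gg_pos hμ0 (k + 1)).le (qpos Z)
    · refine Finset.sum_nonneg fun j hj => mul_nonneg ?_ (qpos _)
      have hjk : j ≤ k := Nat.lt_succ_iff.mp (Finset.mem_range.mp hj)
      have hstep := gg_succ_le hμ0 hμ1 (k - j)
      have : k + 1 - j = (k - j) + 1 := by omega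
      rw [this]
      linarith
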